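/- Let A be a ℤ-graded vector space and let H = ⊕_{n≥1} (⊗^n A[1]) / Σ_{p+q=n} Im(sh_{p,q}) be the quotient of the reduced tensor space on A[1] by the images of all shuffle products. Then the coproduct δ defined on H by δ(x_1⊗…⊗x_n) = Σ_{j=1}^{n-1} ( x_1⊗…⊗x_j ⊗ x_{j+1}⊗…⊗x_n − ε_x(τ) x_{j+1}⊗…⊗x_n ⊗ x_1⊗…⊗x_j ) is well defined, coantisymmetric (τ∘δ = −δ) and satisfies the coJacobi identity (id^{⊗3} + τ_{12}∘τ_{23} + τ_{23}∘τ_{12})∘(δ⊗id)∘δ = 0; that is, (H, δ) is a Lie cogebra. -/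

import Mathlib

noncomputable section
namespace PG

open Finsupp

/-- Free `K`-module on the type `α`. -/
abbrev FM (K : Type) [Field K] (α : Type) : Type := α →₀ K

variable {K : Type} [Field K] {ι : Type}

/-- linear extension of a map defined on the canonical basis -/
def extL {α β : Type} (f : α → FM K β) : FM K α →ₗ[K] FM K β :=
  Finsupp.lift (FM K β) K α f

/-- the sign `(-1)^n` -/
def zsgn (K : Type) [Field K] (n : ℤ) : K := (-1 : K) ^ n

/-- sum of degrees of the entries of a list -/
def dsum {α : Type} (dg : α → ℤ) (l : List α) : ℤ := (l.map dg).sum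

/-- enumerate the positions of a list: (prefix, element, suffix) -/
def focuses {α : Type} : List α → List (List α × α × List α)
  | [] => []
  | a :: l => ([], a, l) :: (focuses l).map (fun t => (a :: t.1, t.2.1, t.2.2))

/-- sum of the values of `f` over a list -/
def fsum {α β : Type} [AddCommMonoid β] (l : List α) (f : α → β) : β := (l.map f).sum

/-- all splittings of a list into two complementary subsequences (I, J),
together with the Koszul sign of the corresponding unshuffle -/
def splits {α : Type} (K : Type) [Field K] (dg : α → ℤ) :
    List α → List (List α × List α × K)
  | [] => [([], [], 1)]
  | a :: l =>
      ((splits K dg l).map (fun t => (a :: t.1, t.2.1, t.2.2)))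
      ++ ((splits K dg l).map
          (fun t => (t.1, a :: t.2.1, zsgn K (dg a * dsum dg t.1) * t.2.2)))

/-- `x₁⋯xₙ ↦ Σ_t ± xₜ ⊗ (x₁⋯ x̂ₜ ⋯xₙ)` : canonical embedding of a symmetric word
into (generator) × (symmetric word), with Koszul signs. -/
def symEmb {α : Type} (K : Type) [Field K] (dg : α → ℤ) : List α → FM K (α × List α)
  | [] => 0
  | a :: l => Finsupp.single (a, l) 1
      + (symEmb K dg l).sum
          (fun b c => (c * zsgn K (dg b.1 * dg a)) • Finsupp.single (b.1, a :: b.2) 1)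

/-- the cofree permutative coproduct on (head) ⊗ (symmetric word):
`Δ(x₀ ⊗ x₁⋯xₙ) = Σ_{I ⊔ J, J≠∅} ε (x₀ ⊗ x_I) ⊗ x_J` (second factor expanded by `symEmb`). -/
def permDelta {α : Type} (K : Type) [Field K] (dg : α → ℤ) (b : α × List α) :
    FM K ((α × List α) × (α × List α)) :=
  fsum (splits K dg b.2) (fun t =>
    match t.2.1 with
    | [] => 0
    | _ => t.2.2 • Finsupp.mapDomain (fun e => ((b.1, t.1), e)) (symEmb K dg t.2.1))

/-- the graded (Koszul-signed) shuffle product on words -/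
def shf (K : Type) [Field K] (ds : ι → ℤ) : List ι → List ι → FM K (List ι)
  | [], v => Finsupp.single v 1
  | u, [] => Finsupp.single u 1
  | a :: u, b :: v =>
      Finsupp.mapDomain (a :: ·) (shf K ds u (b :: v))
      + zsgn K (ds b * dsum ds (a :: u)) • Finsupp.mapDomain (b :: ·) (shf K ds (a :: u) v)
  termination_by u v => u.length + v.length

/-- the iterated signed antisymmetrisation μₙ : μ₁ = id,
μ_{n+1} = μ_n ⊗ id − (μ_n ⊗ id) ∘ τ_{n+1}⁻¹ (Koszul-signed cyclic action). -/
def mu (K : Type) [Field K] (ds : ι → ℤ) : List ι → FM K (List ι)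
  | [] => 0
  | [a] => Finsupp.single [a] 1
  | a :: b :: l =>
      Finsupp.mapDomain (fun w => w ++ [(b :: l).getLast (List.cons_ne_nil _ _)])
        (mu K ds ((a :: b :: l).dropLast))
      - zsgn K (ds a * dsum ds (b :: l)) •
          Finsupp.mapDomain (fun w => w ++ [a]) (mu K ds (b :: l))
  termination_by w => w.length
  decreasing_by
  · simp
  · simp

/-- prepend a general vector (an element of the free module on `ι`) to words -/
def consV (g : FM K ι) (m : FM K (List ι)) : FM K (List ι) :=
  g.sum fun i c => c • Finsupp.mapDomain (i :: ·) m

/-- the nontrivial deconcatenations of a word -/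
def cuts {α : Type} (w : List α) : List (List α × List α) :=
  (List.range (w.length - 1)).map (fun k => (w.take (k + 1), w.drop (k + 1)))

/-- the Koszul crossing exponent of a list of positions (each position `i`
carries the degree `degs i`): sum over inversions of products of degrees. -/
def crossExp (degs : ℕ → ℤ) : List ℕ → ℤ
  | [] => 0
  | a :: l => ((l.filter (fun b => decide (b < a))).map (fun b => degs a * degs b)).sum
      + crossExp degs l

/-- degree of the letter at position `i` of the word `w` -/
def posDeg (ds : ι → ℤ) (w : List ι) (i : ℕ) : ℤ := (w.map ds).getD i 0

/-- subword of `w` on the set of positions `S` (kept in increasing order) -/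
def subw (w : List ι) (S : Finset ℕ) : List ι :=
  ((w.zipIdx.map Prod.swap).filter (fun p => decide (p.1 ∈ S))).map Prod.snd

/-- the Koszul sign of the unshuffle of `w` rearranging its letters in the
order of positions given by `out` -/
def unshSgn (K : Type) [Field K] (ds : ι → ℤ) (w : List ι) (out : List ℕ) : K :=
  zsgn K (crossExp (posDeg ds w) out)

/-- submodule spanned by a set of relations -/
def idealOf {α : Type} (S : Set (FM K α)) : Submodule K (FM K α) := Submodule.span K S

/-- the span, in the free module on `α × α`, of the relations of `S` put in either factor -/
def idealPair {α : Type} (S : Set (FM K α)) : Submodule K (FM K (α × α)) :=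
  Submodule.span K
    ({x | ∃ c, ∃ p ∈ S, x = Finsupp.mapDomain (fun a => (a, c)) p} ∪
     {x | ∃ c, ∃ p ∈ S, x = Finsupp.mapDomain (fun a => (c, a)) p})

/-- the span, in the free module on `α × α × α`, of the relations of `S` put in any factor -/
def idealTriple {α : Type} (S : Set (FM K α)) : Submodule K (FM K (α × α × α)) :=
  Submodule.span K
    ({x | ∃ c d, ∃ p ∈ S, x = Finsupp.mapDomain (fun a => (a, c, d)) p} ∪
     ({x | ∃ c d, ∃ p ∈ S, x = Finsupp.mapDomain (fun a => (c, a, d)) p} ∪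
      {x | ∃ c d, ∃ p ∈ S, x = Finsupp.mapDomain (fun a => (c, d, a)) p}))

/-- graded-symmetry relations on words: `⋯ab⋯ − (−1)^{deg a · deg b} ⋯ba⋯` -/
def symRelW (K : Type) [Field K] (ds : ι → ℤ) : Set (FM K (List ι)) :=
  {x | ∃ u : List ι, ∃ a b : ι, ∃ v : List ι,
    x = Finsupp.single (u ++ a :: b :: v) 1
      - zsgn K (ds a * ds b) • Finsupp.single (u ++ b :: a :: v) 1}

/-- shuffle relations: the images of all the shuffle products `sh_{p,q}`, `p,q ≥ 1` -/
def shRel (K : Type) [Field K] (ds : ι → ℤ) : Set (FM K (List ι)) :=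
  {x | ∃ u v : List ι, u ≠ [] ∧ v ≠ [] ∧ x = shf K ds u v}

/-- graded-symmetry relations in the `List` (symmetric-word) part of `α × List α` -/
def symRelP {α : Type} (K : Type) [Field K] (dg : α → ℤ) : Set (FM K (α × List α)) :=
  {x | ∃ h : α, ∃ l1 : List α, ∃ u v : α, ∃ l2 : List α,
    x = Finsupp.single (h, l1 ++ u :: v :: l2) 1
      - zsgn K (dg u * dg v) • Finsupp.single (h, l1 ++ v :: u :: l2) 1}

/-- the graded flip on the free module on `α × α` -/
def tauP {α : Type} (K : Type) [Field K] (dg : α → ℤ) :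
    FM K (α × α) →ₗ[K] FM K (α × α) :=
  extL (fun p => zsgn K (dg p.1 * dg p.2) • Finsupp.single (p.2, p.1) 1)

/-- τ₁₂ = τ ⊗ id on triples -/
def tau12 {α : Type} (K : Type) [Field K] (dg : α → ℤ) :
    FM K (α × α × α) →ₗ[K] FM K (α × α × α) :=
  extL (fun p => zsgn K (dg p.1 * dg p.2.1) • Finsupp.single (p.2.1, p.1, p.2.2) 1)

/-- τ₂₃ = id ⊗ τ on triples -/
def tau23 {α : Type} (K : Type) [Field K] (dg : α → ℤ) :
    FM K (α × α × α) →ₗ[K] FM K (α × α × α) :=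
  extL (fun p => zsgn K (dg p.2.1 * dg p.2.2) • Finsupp.single (p.1, p.2.2, p.2.1) 1)

/-- `f ⊗ id` for a map `f` with values in two factors (no Koszul sign) -/
def firstT {α : Type} (f : α → FM K (α × α)) :
    FM K (α × α) →ₗ[K] FM K (α × α × α) :=
  extL (fun p => Finsupp.mapDomain (fun q => (q.1, q.2, p.2)) (f p.1))

/-- `id ⊗ f` for a map `f` of degree `degf` with values in two factors (Koszul sign) -/
def secondT {α : Type} (dg : α → ℤ) (degf : ℤ) (f : α → FM K (α × α)) :
    FM K (α × α) →ₗ[K] FM K (α × α × α) :=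
  extL (fun p => zsgn K (degf * dg p.1) •
    Finsupp.mapDomain (fun q => (p.1, q.1, q.2)) (f p.2))

/-- `f ⊗ id + id ⊗ f` for a coderivation-type map `f` of degree `degf` (Koszul sign) -/
def coderT {α : Type} (dg : α → ℤ) (degf : ℤ) (f : α → FM K α) :
    FM K (α × α) →ₗ[K] FM K (α × α) :=
  extL (fun p => Finsupp.mapDomain (fun q => (q, p.2)) (f p.1)
      + zsgn K (degf * dg p.1) • Finsupp.mapDomain (fun q => (p.1, q)) (f p.2))

/-- homogeneity of an element of the free module on `α`, w.r.t. a degree on `α` -/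
def IsHomog {α : Type} (dg : α → ℤ) (x : FM K α) (n : ℤ) : Prop :=
  ∀ a ∈ x.support, dg a = n


/-! ### coproducts on words -/

/-- the unshuffle coproduct of the cocommutative coassociative cogebra
`S⁺(g[1])` (on word representatives):
`Δ(x₁⋯xₙ) = Σ_{I⊔J=[n], I,J≠∅} ε_x(I,J) x_I ⊗ x_J`. -/
def sDelta (K : Type) [Field K] (ds : ι → ℤ) (w : List ι) : FM K (List ι × List ι) :=
  ∑ S ∈ (Finset.range w.length).powerset.filter
      (fun S => S ≠ ∅ ∧ S ≠ Finset.range w.length),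
    unshSgn K ds w
        (S.sort (· ≤ ·) ++ ((Finset.range w.length \ S).sort (· ≤ ·))) •
      Finsupp.single (subw w S, subw w (Finset.range w.length \ S)) 1

/-- the antisymmetrised deconcatenation cocrochet
`δ(x₁⊗…⊗xₙ) = Σ_j (x₁…x_j) ⊗ (x_{j+1}…xₙ) − ε (x_{j+1}…xₙ) ⊗ (x₁…x_j)`. -/
def lieDelta (K : Type) [Field K] (ds : ι → ℤ) (w : List ι) :
    FM K (List ι × List ι) :=
  fsum (cuts w) (fun p =>
    Finsupp.single p 1
      - zsgn K (dsum ds p.1 * dsum ds p.2) • Finsupp.single (p.2, p.1) 1)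

/-- the cofree Leibniz cogebra coproduct on `T⁺(V[1])`:
`δ(x₁⊗…⊗xₙ) = Σ_k (x₁⊗…⊗x_k) ⊗ μ_{n-k}(x_{k+1}⊗…⊗xₙ)`. -/
def leibDelta (K : Type) [Field K] (ds : ι → ℤ) (w : List ι) :
    FM K (List ι × List ι) :=
  fsum (cuts w) (fun p => Finsupp.mapDomain (fun m => (p.1, m)) (mu K ds p.2))

/-! ### coderivation-type operators on words -/

/-- `Σ_k ± x₁⊗…⊗q₁(x_k)⊗…⊗xₙ` with Koszul prefix signs `(-1)^{Σ_{i<k} deg xᵢ}` -/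
def repl1 (K : Type) [Field K] (ds : ι → ℤ) (q1 : ι → FM K ι) :
    List ι → FM K (List ι)
  | [] => 0
  | a :: l => (q1 a).sum (fun i c => c • Finsupp.single (i :: l) 1)
      + zsgn K (ds a) • Finsupp.mapDomain (a :: ·) (repl1 K ds q1 l)

/-- `Σ_k ± x₁⊗…⊗q₂(x_k,x_{k+1})⊗…⊗xₙ` (collapse of every adjacent pair) with
Koszul prefix signs -/
def repl2 (K : Type) [Field K] (ds : ι → ℤ) (q2 : ι → ι → FM K ι) :
    List ι → FM K (List ι)
  | [] => 0
  | [_] => 0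
  | a :: b :: l => (q2 a b).sum (fun i c => c • Finsupp.single (i :: l) 1)
      + zsgn K (ds a) • Finsupp.mapDomain (a :: ·) (repl2 K ds q2 (b :: l))

/-- collapse the leading pair with `q2h`, and every interior pair with `q2i` -/
def headInt (K : Type) [Field K] (ds : ι → ℤ) (q2h q2i : ι → ι → FM K ι) :
    List ι → FM K (List ι)
  | [] => 0
  | [_] => 0
  | a :: b :: l => (q2h a b).sum (fun i c => c • Finsupp.single (i :: l) 1)
      + zsgn K (ds a) • Finsupp.mapDomain (a :: ·) (repl2 K ds q2i (b :: l))

/-- `D₂(α,β) = (−1)^{deg α} α∧β` on basis letters -/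
def d2of (K : Type) [Field K] (ds : ι → ℤ) (w2 : ι → ι → FM K ι) (a b : ι) : FM K ι :=
  zsgn K (ds a) • w2 a b

/-- `D₂∘μ₂(α,β) = D₂(α,β) − (−1)^{deg α · deg β} D₂(β,α)` on basis letters -/
def d2mu (K : Type) [Field K] (ds : ι → ℤ) (w2 : ι → ι → FM K ι) (a b : ι) : FM K ι :=
  d2of K ds w2 a b - zsgn K (ds a * ds b) • d2of K ds w2 b a

/-- the codifferential of the Leibniz cogebra `T⁺(𝒢[1])` determined by a product
`∧` (no differential part):
`D(α₁⊗…⊗αₙ) = D₂(α₁,α₂)⊗α₃⊗…⊗αₙ + Σ_k ± α₁⊗…⊗(D₂∘μ₂)(α_k,α_{k+1})⊗…⊗αₙ` -/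
def Dpre (K : Type) [Field K] (ds : ι → ℤ) (w2 : ι → ι → FM K ι) :
    List ι → FM K (List ι) :=
  headInt K ds (d2of K ds w2) (d2mu K ds w2)

/-! ### the extended bracket and the extension `R₂` of a pre-Lie product -/

/-- the extension of a degree −1 bracket `b2` to words:
`[X,Y] = Σ_{shuffles, adjacent pair (x from X, y from Y)} ± …⊗[x,y]⊗…` -/
def brS (K : Type) [Field K] (ds : ι → ℤ) (b2 : ι → ι → FM K ι) :
    List ι → List ι → FM K (List ι)
  | [], _ => 0
  | _, [] => 0
  | a :: u, b :: v =>
      Finsupp.mapDomain (a :: ·) (brS K ds b2 u (b :: v))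
      + zsgn K (ds b * dsum ds (a :: u)) •
          Finsupp.mapDomain (b :: ·) (brS K ds b2 (a :: u) v)
      + zsgn K (ds b * dsum ds u) • consV (b2 a b) (shf K ds u v)
  termination_by u v => u.length + v.length

/-- the bracketed tail terms of `R₂`:
`Σ_k u₁⊗…⊗u_{k-1}⊗[u_k,b]⊗sh(u_{k+1}…, v)` with signs -/
def r2brTail (K : Type) [Field K] (ds : ι → ℤ) (b2 : ι → ι → FM K ι) :
    List ι → ι → List ι → FM K (List ι)
  | [], _, _ => 0
  | x :: u, b, v =>
      zsgn K (ds b * dsum ds u) • consV (b2 x b) (shf K ds u v)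
      + Finsupp.mapDomain (x :: ·) (r2brTail K ds b2 u b v)

/-- `[α,β] = α◇β − (−1)^{deg α · deg β} β◇α` on basis letters -/
def brOf (K : Type) [Field K] (ds : ι → ℤ) (dia2 : ι → ι → FM K ι) (a b : ι) : FM K ι :=
  dia2 a b - zsgn K (ds a * ds b) • dia2 b a

/-- the extension `R₂` of the pre-Lie product `◇` to `T⁺(𝒢[1])`:
`R₂(α₁⊗…⊗αₚ, α_{p+1}⊗…⊗α_{p+q}) = ±(α₁◇α_{p+1})⊗sh(…) + Σ_k ± α₁⊗…⊗[α_k,α_{p+1}]⊗sh(…)` -/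
def R2w (K : Type) [Field K] (ds : ι → ℤ) (dia2 : ι → ι → FM K ι) :
    List ι → List ι → FM K (List ι)
  | [], _ => 0
  | _, [] => 0
  | a :: u, b :: v =>
      zsgn K (ds b * dsum ds u) • consV (dia2 a b) (shf K ds u v)
      + Finsupp.mapDomain (a :: ·) (r2brTail K ds (brOf K ds dia2) u b v)


/-! ### the construction on `H[1] ⊗ S(H[1])`, where `H = T⁺(𝒢[1])` -/

/-- the twice-shifted degree `deg'(X) = deg(X) − 1` of a word `X ∈ H[1]` -/
def dgp (ds : ι → ℤ) (w : List ι) : ℤ := dsum ds w - 1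

/-- basis of (word representatives of) `H[1] ⊗ S(H[1])` : a head word and a
list of factor words -/
abbrev BB (ι : Type) : Type := List ι × List (List ι)

/-- the `deg'`-degree of a basis element of `H[1] ⊗ S(H[1])` -/
def degB (ds : ι → ℤ) (b : BB ι) : ℤ := dgp ds b.1 + dsum (dgp ds) b.2

/-- embed a symmetric product whose first factor is a general element of `H` -/
def symEmbV (K : Type) [Field K] (ds : ι → ℤ) (g : FM K (List ι))
    (L : List (List ι)) : FM K (BB ι) :=
  g.sum fun w c => c • symEmb K (dgp ds) (w :: L)

/-- the coderivation `m` of `H[1] ⊗ S(H[1])` extending the codifferential `D` of `H`: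
`m(X₀⊗X₁⋯Xₙ) = D(X₀)⊗X₁⋯Xₙ + (−1)^{x₀'} Σ_j ± X₀⊗D(X_j)·X₁⋯ĵ⋯Xₙ` -/
def mB (K : Type) [Field K] (ds : ι → ℤ) (w2 : ι → ι → FM K ι) (b : BB ι) :
    FM K (BB ι) :=
  (Dpre K ds w2 b.1).sum (fun w c => c • Finsupp.single (w, b.2) 1)
  + zsgn K (dgp ds b.1) • fsum (focuses b.2) (fun t =>
      zsgn K (dgp ds t.2.1 * dsum (dgp ds) t.1) •
        (Dpre K ds w2 t.2.1).sum
          (fun w c => c • Finsupp.single (b.1, w :: (t.1 ++ t.2.2)) 1))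

/-- `R₂'(X,Y) = (−1)^{deg' X} R₂(X,Y)` -/
def R2p (K : Type) [Field K] (ds : ι → ℤ) (dia2 : ι → ι → FM K ι)
    (X Y : List ι) : FM K (List ι) :=
  zsgn K (dgp ds X) • R2w K ds dia2 X Y

/-- `ℓ₂(X,Y) = R₂'(X,Y) + (−1)^{deg'X · deg'Y} R₂'(Y,X)` -/
def ell2 (K : Type) [Field K] (ds : ι → ℤ) (dia2 : ι → ι → FM K ι)
    (X Y : List ι) : FM K (List ι) :=
  R2p K ds dia2 X Y + zsgn K (dgp ds X * dgp ds Y) • R2p K ds dia2 Y X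

/-- the coderivation `R` of `H[1] ⊗ S(H[1])` extending `R₂'`:
`R(X₀⊗X₁⋯Xₙ) = Σ_i ± R₂'(X₀,X_i)⊗X₁⋯î⋯Xₙ + (−1)^{x₀'} Σ_{i<j} ± X₀⊗ℓ₂(X_i,X_j)·X₁⋯îĵ⋯Xₙ` -/
def RB (K : Type) [Field K] (ds : ι → ℤ) (dia2 : ι → ι → FM K ι) (b : BB ι) :
    FM K (BB ι) :=
  fsum (focuses b.2) (fun t =>
    zsgn K (dgp ds t.2.1 * dsum (dgp ds) t.1) •
      (R2p K ds dia2 b.1 t.2.1).sum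
        (fun w c => c • Finsupp.single (w, t.1 ++ t.2.2) 1))
  + zsgn K (dgp ds b.1) • fsum (focuses b.2) (fun t1 =>
      fsum (focuses t1.2.2) (fun t2 =>
        zsgn K (dgp ds t1.2.1 * dsum (dgp ds) t1.1
            + dgp ds t2.2.1 * (dsum (dgp ds) t1.1 + dsum (dgp ds) t2.1)) •
          (ell2 K ds dia2 t1.2.1 t2.2.1).sum
            (fun w c => c • Finsupp.single (b.1, w :: (t1.1 ++ t2.1 ++ t2.2.2)) 1)))

/-- the Leibniz-type coproduct `κ` on `H[1] ⊗ S(H[1])`: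
`κ(X₀⊗X₁⋯Xₙ) = Σ_{U₀⊗V₀=X₀, I⊔J} (−1)^{u₀'} ( ε (U₀⊗X_I) ⊗ μV₀·X_J
+ ε (μV₀⊗X_J) ⊗ U₀·X_I ) + (−1)^{x₀'} X₀⊗κ'(X₁⋯Xₙ)` -/
def kappaB (K : Type) [Field K] (ds : ι → ℤ) (b : BB ι) :
    FM K (BB ι × BB ι) :=
  fsum (cuts b.1) (fun uv =>
    fsum (splits K (dgp ds) b.2) (fun t =>
      (zsgn K (dgp ds uv.1) * t.2.2 * zsgn K (dgp ds uv.2 * dsum (dgp ds) t.1)) •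
        Finsupp.mapDomain (fun e => ((uv.1, t.1), e))
          (symEmbV K ds (mu K ds uv.2) t.2.1)
      + (zsgn K (dgp ds uv.1) * t.2.2 * zsgn K (dgp ds uv.1 * dgp ds uv.2)
            * zsgn K (dgp ds uv.1 * dsum (dgp ds) t.1)) •
          (mu K ds uv.2).sum (fun m c =>
            c • Finsupp.mapDomain (fun e => ((m, t.1), e))
                  (symEmb K (dgp ds) (uv.1 :: t.2.1)))))
  + zsgn K (dgp ds b.1) • fsum (focuses b.2) (fun tf =>
      fsum (cuts tf.2.1) (fun uv =>
        fsum (splits K (dgp ds) tf.1) (fun tp =>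
          fsum (splits K (dgp ds) tf.2.2) (fun tq =>
            (zsgn K (dsum (dgp ds) tf.1) * zsgn K (dgp ds uv.1)
                * tp.2.2 * tq.2.2
                * zsgn K (dsum (dgp ds) tp.2.1 * dsum (dgp ds) tq.1
                    + dgp ds tf.2.1 * (dsum (dgp ds) tp.2.1 + dsum (dgp ds) tq.1))
                * zsgn K (dsum (dgp ds) tp.2.1 + dsum (dgp ds) tq.1)) •
              (Finsupp.mapDomain (fun e => ((b.1, tp.1 ++ tq.1 ++ [uv.1]), e))
                  (symEmbV K ds (mu K ds uv.2) (tp.2.1 ++ tq.2.1))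
               + zsgn K (dgp ds uv.1 * dgp ds uv.2) •
                  (mu K ds uv.2).sum (fun m c =>
                    c • Finsupp.mapDomain (fun e => ((b.1, tp.1 ++ tq.1 ++ [m]), e))
                          (symEmb K (dgp ds) (uv.1 :: (tp.2.1 ++ tq.2.1)))))))))


section Lemmas
variable {K : Type} [Field K] {ι : Type}

lemma zsgn_add (m n : ℤ) : zsgn K (m + n) = zsgn K m * zsgn K n := by
  unfold zsgn; rw [zpow_add₀ (by norm_num : (-1 : K) ≠ 0)]

lemma zsgn_zero : zsgn K 0 = 1 := by simp [zsgn]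

lemma zsgn_mul_self (n : ℤ) : zsgn K n * zsgn K n = 1 := by
  rw [← zsgn_add]
  have : n + n = 2 * n := by ring
  rw [this]
  show zsgn K (2 * n) = 1
  unfold zsgn
  rw [zpow_mul]
  norm_num

lemma zsgn_two_mul_add (m n : ℤ) : zsgn K (2 * m + n) = zsgn K n := by
  rw [zsgn_add]
  have : zsgn K (2 * m) = 1 := by unfold zsgn; rw [zpow_mul]; norm_num
  rw [this, one_mul]

-- fsum lemmas
lemma fsum_nil {α β : Type} [AddCommMonoid β] (f : α → β) : fsum ([] : List α) f = 0 := rfl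

lemma fsum_cons {α β : Type} [AddCommMonoid β] (a : α) (l : List α) (f : α → β) :
    fsum (a :: l) f = f a + fsum l f := by simp [fsum]

lemma fsum_append {α β : Type} [AddCommMonoid β] (l₁ l₂ : List α) (f : α → β) :
    fsum (l₁ ++ l₂) f = fsum l₁ f + fsum l₂ f := by simp [fsum]

lemma fsum_map {α γ β : Type} [AddCommMonoid β] (l : List α) (g : α → γ) (f : γ → β) :
    fsum (l.map g) f = fsum l (fun a => f (g a)) := by
  simp [fsum, Function.comp_def]

lemma fsum_congr {α β : Type} [AddCommMonoid β] {l : List α} {f g : α → β}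
    (h : ∀ a ∈ l, f a = g a) : fsum l f = fsum l g := by
  unfold fsum; rw [List.map_congr_left h]

lemma map_fsum {α β γ : Type} [AddCommMonoid β] [AddCommMonoid γ] {H : Type}
    [FunLike H β γ] [AddMonoidHomClass H β γ] (h : H) (l : List α) (f : α → β) :
    h (fsum l f) = fsum l (fun a => h (f a)) := by
  unfold fsum; rw [map_list_sum]; simp [Function.comp_def]

lemma fsum_neg {α β : Type} [AddCommGroup β] (l : List α) (f : α → β) :
    fsum l (fun a => - f a) = - fsum l f := by
  induction l with
  | nil => simp [fsum]
  | cons a l ih => rw [fsum_cons, fsum_cons, ih]; abel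

lemma fsum_add_fn {α β : Type} [AddCommMonoid β] (l : List α) (f g : α → β) :
    fsum l (fun a => f a + g a) = fsum l f + fsum l g := by
  induction l with
  | nil => simp [fsum]
  | cons a l ih => rw [fsum_cons, fsum_cons, fsum_cons, ih]; abel

lemma fsum_sub_fn {α β : Type} [AddCommGroup β] (l : List α) (f g : α → β) :
    fsum l (fun a => f a - g a) = fsum l f - fsum l g := by
  simp only [sub_eq_add_neg]; rw [fsum_add_fn, fsum_neg]

lemma smul_fsum {α β : Type} [AddCommMonoid β] {R : Type} [Monoid R] [DistribMulAction R β]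
    (c : R) (l : List α) (f : α → β) :
    c • fsum l f = fsum l (fun a => c • f a) := by
  induction l with
  | nil => simp [fsum]
  | cons a l ih => rw [fsum_cons, fsum_cons, smul_add, ih]

lemma fsum_zero_fn {α β : Type} [AddCommMonoid β] (l : List α) :
    fsum l (fun _ => (0 : β)) = 0 := by simp [fsum]

-- dsum lemmas
lemma dsum_nil {α : Type} (dg : α → ℤ) : dsum dg ([] : List α) = 0 := rfl
lemma dsum_cons {α : Type} (dg : α → ℤ) (a : α) (l : List α) :
    dsum dg (a :: l) = dg a + dsum dg l := by simp [dsum]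
lemma dsum_append {α : Type} (dg : α → ℤ) (l₁ l₂ : List α) :
    dsum dg (l₁ ++ l₂) = dsum dg l₁ + dsum dg l₂ := by simp [dsum]
lemma dsum_perm {α : Type} (dg : α → ℤ) {l₁ l₂ : List α} (h : l₁.Perm l₂) :
    dsum dg l₁ = dsum dg l₂ := by
  unfold dsum; exact List.Perm.sum_eq (h.map dg)

-- extL lemmas
lemma extL_apply {α β : Type} (f : α → FM K β) (x : FM K α) :
    extL f x = x.sum fun a c => c • f a := by
  simp [extL, Finsupp.lift_apply]

lemma extL_single {α β : Type} (f : α → FM K β) (a : α) (c : K) :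
    extL f (single a c) = c • f a := by
  rw [extL_apply, Finsupp.sum_single_index]; simp

lemma extL_mapDomain {α γ β : Type} (f : γ → FM K β) (g : α → γ) (x : FM K α) :
    extL f (Finsupp.mapDomain g x) = extL (fun a => f (g a)) x := by
  rw [extL_apply, extL_apply]
  exact Finsupp.sum_mapDomain_index (by simp) (by intros; rw [add_smul])

lemma extL_congr_support {α β : Type} {f g : α → FM K β} {x : FM K α}
    (h : ∀ a ∈ x.support, f a = g a) : extL f x = extL g x := by
  rw [extL_apply, extL_apply]
  exact Finsupp.sum_congr (fun a ha => by rw [h a ha])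

lemma extL_fun_add {α β : Type} (f g : α → FM K β) (x : FM K α) :
    extL (fun a => f a + g a) x = extL f x + extL g x := by
  rw [extL_apply, extL_apply, extL_apply, ← Finsupp.sum_add]
  exact Finsupp.sum_congr (fun a _ => by rw [smul_add])

lemma extL_fun_smul {α β : Type} (c : K) (f : α → FM K β) (x : FM K α) :
    extL (fun a => c • f a) x = c • extL f x := by
  rw [extL_apply, extL_apply, Finsupp.smul_sum]
  exact Finsupp.sum_congr (fun a _ => smul_comm _ _ _)

lemma extL_map {α β γ : Type} (f : α → FM K β) (g : β → γ) (x : FM K α) :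
    extL (fun a => Finsupp.mapDomain g (f a)) x = Finsupp.mapDomain g (extL f x) := by
  rw [extL_apply, extL_apply]
  have : Finsupp.mapDomain g (x.sum fun a c => c • f a)
      = (Finsupp.lmapDomain K K g) (x.sum fun a c => c • f a) := rfl
  rw [this, map_finsuppSum (Finsupp.lmapDomain K K g)]
  exact Finsupp.sum_congr (fun a _ => by simp)

lemma extL_single_comp {α β : Type} (g : α → β) (x : FM K α) :
    extL (fun a => single (g a) (1 : K)) x = Finsupp.mapDomain g x := by
  rw [extL_apply, Finsupp.mapDomain]
  exact Finsupp.sum_congr (fun a _ => by rw [Finsupp.smul_single, smul_eq_mul, mul_one])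

end Lemmas
section Lemmas2
variable {K : Type} [Field K] {ι : Type}

/-- the tensor of two elements of free modules -/
def tmul {α β : Type} (X : FM K α) (Y : FM K β) : FM K (α × β) :=
  extL (fun x => Finsupp.mapDomain (Prod.mk x) Y) X

lemma tmul_single_one_left {α β : Type} (x : α) (Y : FM K β) :
    tmul (single x (1:K)) Y = Finsupp.mapDomain (Prod.mk x) Y := by
  rw [tmul, extL_single, one_smul]

lemma tmul_single_one_right {α β : Type} (X : FM K α) (y : β) :
    tmul X (single y (1:K)) = Finsupp.mapDomain (fun x => (x, y)) X := by
  rw [tmul, ← extL_single_comp]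
  exact extL_congr_support (fun a _ => by rw [Finsupp.mapDomain_single])

lemma tmul_single_single {α β : Type} (x : α) (y : β) :
    tmul (single x (1:K)) (single y (1:K)) = single (x, y) 1 := by
  rw [tmul_single_one_left, Finsupp.mapDomain_single]

lemma tmul_add_left {α β : Type} (X₁ X₂ : FM K α) (Y : FM K β) :
    tmul (X₁ + X₂) Y = tmul X₁ Y + tmul X₂ Y := by
  unfold tmul; exact map_add _ _ _

lemma tmul_smul_left {α β : Type} (c : K) (X : FM K α) (Y : FM K β) :
    tmul (c • X) Y = c • tmul X Y := by
  unfold tmul; exact map_smul _ _ _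

lemma tmul_mapDomain_left {α α' β : Type} (g : α → α') (X : FM K α) (Y : FM K β) :
    tmul (Finsupp.mapDomain g X) Y
      = Finsupp.mapDomain (fun p => (g p.1, p.2)) (tmul X Y) := by
  unfold tmul
  rw [extL_mapDomain, ← extL_map]
  refine extL_congr_support (fun a _ => ?_)
  rw [← Finsupp.mapDomain_comp]
  rfl

lemma tmul_flip {α β : Type} (X : FM K α) (Y : FM K β) :
    tmul X Y = extL (fun y => Finsupp.mapDomain (fun x => (x, y)) X) Y := by
  rw [tmul, extL_apply, extL_apply]
  have h1 : ∀ (x : α) (cx : K), cx • Finsupp.mapDomain (Prod.mk x) Y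
      = Y.sum fun y cy => cx • single (x, y) cy := by
    intro x cx
    rw [Finsupp.mapDomain, Finsupp.smul_sum]
  have h2 : ∀ (y : β) (cy : K), cy • Finsupp.mapDomain (fun x => (x, y)) X
      = X.sum fun x cx => cy • single (x, y) cx := by
    intro y cy
    rw [Finsupp.mapDomain, Finsupp.smul_sum]
  calc (X.sum fun a c => c • Finsupp.mapDomain (Prod.mk a) Y)
      = X.sum fun x cx => Y.sum fun y cy => cx • single (x,y) cy :=
        Finsupp.sum_congr (fun x _ => h1 x _)
    _ = Y.sum fun y cy => X.sum fun x cx => cx • single (x,y) cy := Finsupp.sum_comm _ _ _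
    _ = Y.sum fun y cy => X.sum fun x cx => cy • single (x,y) cx := by
        refine Finsupp.sum_congr fun y _ => Finsupp.sum_congr fun x _ => ?_
        rw [Finsupp.smul_single, Finsupp.smul_single, smul_eq_mul, smul_eq_mul, mul_comm]
    _ = Y.sum fun a c => c • Finsupp.mapDomain (fun x => (x, a)) X :=
        (Finsupp.sum_congr (fun y _ => (h2 y _))).symm

-- cuts lemmas
lemma cuts_cons {α : Type} (x : α) (w : List α) (hw : w ≠ []) :
    cuts (x :: w) = ([x], w) :: (cuts w).map (fun p => (x :: p.1, p.2)) := by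
  unfold cuts
  have hl : (x :: w).length - 1 = (w.length - 1) + 1 := by
    have := List.length_pos_iff.2 hw
    simp; omega
  rw [hl, List.range_succ_eq_map]
  simp [Function.comp_def, List.take_succ_cons, List.drop_succ_cons, Nat.succ_eq_add_one]

lemma mem_cuts {α : Type} {w : List α} {p : List α × List α} (hp : p ∈ cuts w) :
    p.1 ≠ [] ∧ p.2 ≠ [] ∧ p.1 ++ p.2 = w := by
  unfold cuts at hp
  simp only [List.mem_map, List.mem_range] at hp
  obtain ⟨k, hk, rfl⟩ := hp
  have hlen : k + 1 < w.length := by omega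
  refine ⟨?_, ?_, List.take_append_drop _ _⟩
  · simp only [ne_eq, List.take_eq_nil_iff]
    intro h
    rcases h with h | h
    · exact absurd h (by omega)
    · subst h; simp at hlen
  · simp only [ne_eq, List.drop_eq_nil_iff]
    omega

end Lemmas2
section Lemmas3
variable {K : Type} [Field K] {ι : Type}

lemma shf_nil_left (ds : ι → ℤ) (v : List ι) : shf K ds [] v = single v 1 := by
  rw [shf]

lemma shf_nil_right (ds : ι → ℤ) (u : List ι) : shf K ds u [] = single u 1 := by
  cases u with
  | nil => rw [shf]
  | cons a u => rw [shf]; simp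

lemma shf_cons_cons (ds : ι → ℤ) (a b : ι) (u v : List ι) :
    shf K ds (a :: u) (b :: v)
      = Finsupp.mapDomain (a :: ·) (shf K ds u (b :: v))
      + zsgn K (ds b * dsum ds (a :: u)) •
          Finsupp.mapDomain (b :: ·) (shf K ds (a :: u) v) := by
  rw [shf]

lemma shf_support_perm (ds : ι → ℤ) :
    ∀ (u v : List ι), ∀ w ∈ (shf K ds u v).support, w.Perm (u ++ v) := by
  classical
  intro u
  induction u with
  | nil =>
    intro v w hw
    rw [shf_nil_left] at hw
    have := Finsupp.support_single_subset hw
    simp at this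
    subst this
    simp
  | cons a u ihu =>
    intro v
    induction v with
    | nil =>
      intro w hw
      rw [shf_nil_right] at hw
      have := Finsupp.support_single_subset hw
      simp at this
      subst this
      simp
    | cons b v ihv =>
      intro w hw
      rw [shf_cons_cons] at hw
      have hw' := Finsupp.support_add hw
      simp only [Finset.mem_union] at hw'
      rcases hw' with hw' | hw'
      · have := Finsupp.mapDomain_support hw'
        simp only [Finset.mem_image] at this
        obtain ⟨w', hw'', rfl⟩ := this
        have := ihu (b :: v) w' hw''
        simpa using this.cons a
      · have hw'' := Finsupp.support_smul hw'
        have := Finsupp.mapDomain_support hw''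
        simp only [Finset.mem_image] at this
        obtain ⟨w', hw3, rfl⟩ := this
        have h1 := ihv w' hw3
        have h2 : (b :: w').Perm (b :: ((a :: u) ++ v)) := h1.cons b
        exact h2.trans (List.perm_middle).symm

lemma shf_support_dsum (ds : ι → ℤ) (u v : List ι) {w : List ι}
    (hw : w ∈ (shf K ds u v).support) : dsum ds w = dsum ds u + dsum ds v := by
  have := dsum_perm ds (shf_support_perm ds u v w hw)
  rw [this, dsum_append]

lemma shf_support_ne_nil (ds : ι → ℤ) (u v : List ι) (hu : u ≠ []) {w : List ι}
    (hw : w ∈ (shf K ds u v).support) : w ≠ [] := by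
  have h := shf_support_perm ds u v w hw
  intro hnil
  subst hnil
  have := h.symm.eq_nil
  simp at this
  exact hu this.1

end Lemmas3
section Lemmas4
variable {K : Type} [Field K] {ι : Type}

lemma fsum_range {β : Type} [AddCommMonoid β] (m : ℕ) (g : ℕ → β) :
    fsum (List.range m) g = ∑ k ∈ Finset.range m, g k := rfl

/-- full deconcatenation (with trivial cuts) -/
def dP (w : List ι) : FM K (List ι × List ι) :=
  ∑ k ∈ Finset.range (w.length + 1), single (w.take k, w.drop k) 1

/-- reduced deconcatenation -/
def dcF (w : List ι) : FM K (List ι × List ι) :=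
  ∑ k ∈ Finset.range (w.length - 1), single (w.take (k+1), w.drop (k+1)) 1

lemma tauP_single {α : Type} (dg : α → ℤ) (p : α × α) :
    tauP K dg (single p (1:K)) = zsgn K (dg p.1 * dg p.2) • single (p.2, p.1) 1 := by
  rw [tauP, extL_single, one_smul]

lemma tau12_single {α : Type} (dg : α → ℤ) (p : α × α × α) :
    tau12 K dg (single p (1:K))
      = zsgn K (dg p.1 * dg p.2.1) • single (p.2.1, p.1, p.2.2) 1 := by
  rw [tau12, extL_single, one_smul]

lemma tau23_single {α : Type} (dg : α → ℤ) (p : α × α × α) :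
    tau23 K dg (single p (1:K))
      = zsgn K (dg p.2.1 * dg p.2.2) • single (p.1, p.2.2, p.2.1) 1 := by
  rw [tau23, extL_single, one_smul]

lemma fsum_cuts {β : Type} [AddCommMonoid β] (w : List ι) (f : List ι × List ι → β) :
    fsum (cuts w) f
      = ∑ k ∈ Finset.range (w.length - 1), f (w.take (k+1), w.drop (k+1)) := by
  rw [cuts, fsum_map, fsum_range]

lemma lieDelta_eq (ds : ι → ℤ) (w : List ι) :
    lieDelta K ds w = dcF w - tauP K (dsum ds) (dcF w) := by
  rw [lieDelta, fsum_cuts, dcF, map_sum, ← Finset.sum_sub_distrib]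
  refine Finset.sum_congr rfl (fun k _ => ?_)
  rw [tauP_single]

lemma tau_lieDelta (ds : ι → ℤ) (w : List ι) :
    tauP K (dsum ds) (lieDelta K ds w) = - lieDelta K ds w := by
  rw [lieDelta, map_fsum, ← fsum_neg]
  refine fsum_congr (fun p _ => ?_)
  rw [map_sub, map_smul, tauP_single, tauP_single]
  rw [smul_smul, mul_comm (dsum ds p.2) (dsum ds p.1), zsgn_mul_self, one_smul]
  abel

lemma tau_comp_lieDelta (ds : ι → ℤ) :
    (tauP K (dsum ds)).comp (extL (lieDelta K ds)) = - extL (lieDelta K ds) := by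
  apply Finsupp.lhom_ext
  intro w c
  simp only [LinearMap.comp_apply, LinearMap.neg_apply, extL_single, map_smul,
    tau_lieDelta, smul_neg]

lemma stmt2_antisym (ds : ι → ℤ) (x : FM K (List ι)) :
    tauP K (dsum ds) (extL (lieDelta K ds) x) + extL (lieDelta K ds) x
      ∈ idealPair (shRel K ds) := by
  have h : tauP K (dsum ds) (extL (lieDelta K ds) x) = - extL (lieDelta K ds) x := by
    have := congrArg (fun φ => φ x) (tau_comp_lieDelta (K := K) ds)
    simpa using this
  rw [h, neg_add_cancel]
  exact Submodule.zero_mem _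

end Lemmas4
section Lemmas5
variable {K : Type} [Field K] {ι : Type}

lemma cuts_nil {α : Type} : cuts ([] : List α) = [] := rfl
lemma cuts_single {α : Type} (x : α) : cuts [x] = [] := rfl

/-- triple deconcatenations -/
def tcuts {α : Type} : List α → List (List α × List α × List α)
  | [] => []
  | x :: w => (cuts w).map (fun q => ([x], q.1, q.2))
      ++ (tcuts w).map (fun t => (x :: t.1, t.2))

lemma tcuts_reindex1 {β : Type} [AddCommMonoid β] :
    ∀ (w : List ι) (f : List ι × List ι × List ι → β),
    fsum (cuts w) (fun p => fsum (cuts p.1) (fun q => f (q.1, q.2, p.2)))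
      = fsum (tcuts w) f := by
  intro w
  induction w with
  | nil => intro f; rw [cuts_nil, tcuts]; rfl
  | cons x w ih =>
    intro f
    by_cases hw : w = []
    · subst hw
      rw [cuts_single, tcuts, cuts_nil, tcuts]
      simp [fsum]
    · rw [cuts_cons x w hw, tcuts, fsum_cons, fsum_map, fsum_append, fsum_map, fsum_map]
      rw [cuts_single, fsum_nil, zero_add]
      have hpt : ∀ p ∈ cuts w,
          fsum (cuts (x :: p.1)) (fun q => f (q.1, q.2, p.2))
            = f ([x], p.1, p.2)
              + fsum (cuts p.1) (fun q => f (x :: q.1, q.2, p.2)) := by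
        intro p hp
        rw [cuts_cons x p.1 (mem_cuts hp).1, fsum_cons, fsum_map]
      rw [fsum_congr hpt, fsum_add_fn]
      rw [ih (fun t => f (x :: t.1, t.2))]

lemma tcuts_reindex2 {β : Type} [AddCommMonoid β] :
    ∀ (w : List ι) (g : List ι × List ι × List ι → β),
    fsum (cuts w) (fun p => fsum (cuts p.2) (fun q => g (p.1, q.1, q.2)))
      = fsum (tcuts w) g := by
  intro w
  induction w with
  | nil => intro g; rw [cuts_nil, tcuts]; rfl
  | cons x w ih =>
    intro g
    by_cases hw : w = []
    · subst hw
      rw [cuts_single, tcuts, cuts_nil, tcuts]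
      simp [fsum]
    · rw [cuts_cons x w hw, tcuts, fsum_cons, fsum_map, fsum_append, fsum_map, fsum_map]
      rw [ih (fun t => g (x :: t.1, t.2))]

lemma firstT_single {α : Type} (f : α → FM K (α × α)) (p : α × α) :
    firstT f (single p (1:K))
      = Finsupp.mapDomain (fun q => (q.1, q.2, p.2)) (f p.1) := by
  rw [firstT, extL_single, one_smul]

end Lemmas5
section Lemmas6
variable {K : Type} [Field K] {ι : Type}

lemma mapDomain_fsum {α β γ : Type} (g : β → γ) (l : List α) (f : α → FM K β) :
    Finsupp.mapDomain g (fsum l f) = fsum l (fun a => Finsupp.mapDomain g (f a)) := by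
  have h : ∀ y : FM K β, Finsupp.mapDomain g y = Finsupp.lmapDomain K K g y :=
    fun _ => rfl
  rw [h, map_fsum]
  exact fsum_congr (fun a _ => (h (f a)).symm)

lemma mapDomain_sub' {α β : Type} (g : α → β) (X Y : FM K α) :
    Finsupp.mapDomain g (X - Y) = Finsupp.mapDomain g X - Finsupp.mapDomain g Y := by
  exact map_sub (Finsupp.lmapDomain K K g) X Y

lemma mapDomain_smul' {α β : Type} (g : α → β) (c : K) (X : FM K α) :
    Finsupp.mapDomain g (c • X) = c • Finsupp.mapDomain g X := by
  exact map_smul (Finsupp.lmapDomain K K g) c X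

/-- the per-triple term of `(δ⊗id)∘δ` -/
def Efun (ds : ι → ℤ) (t : List ι × List ι × List ι) : FM K (List ι × List ι × List ι) :=
  (single (t.1, t.2.1, t.2.2) (1:K)
    - zsgn K (dsum ds t.1 * dsum ds t.2.1) • single (t.2.1, t.1, t.2.2) 1)
  - zsgn K (dsum ds t.1 * (dsum ds t.2.1 + dsum ds t.2.2)) •
      (single (t.2.1, t.2.2, t.1) 1
        - zsgn K (dsum ds t.2.1 * dsum ds t.2.2) • single (t.2.2, t.2.1, t.1) 1)

lemma firstT_lieDelta (ds : ι → ℤ) (w : List ι) :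
    firstT (lieDelta K ds) (lieDelta K ds w) = fsum (tcuts w) (Efun ds) := by
  rw [lieDelta, map_fsum]
  have hpt : ∀ p ∈ cuts w,
      firstT (lieDelta K ds)
          (single p 1 - zsgn K (dsum ds p.1 * dsum ds p.2) • single (p.2, p.1) 1)
        = fsum (cuts p.1) (fun q =>
            single (q.1, q.2, p.2) (1:K)
              - zsgn K (dsum ds q.1 * dsum ds q.2) • single (q.2, q.1, p.2) 1)
          - fsum (cuts p.2) (fun q =>
              zsgn K (dsum ds p.1 * (dsum ds q.1 + dsum ds q.2)) •
                (single (q.1, q.2, p.1) (1:K)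
                  - zsgn K (dsum ds q.1 * dsum ds q.2) • single (q.2, q.1, p.1) 1)) := by
    intro p hp
    rw [map_sub, map_smul, firstT_single, firstT_single]
    dsimp only
    congr 1
    · -- first piece
      rw [lieDelta, mapDomain_fsum]
      refine fsum_congr (fun q _ => ?_)
      rw [mapDomain_sub', mapDomain_smul', Finsupp.mapDomain_single, Finsupp.mapDomain_single]
    · -- second piece
      rw [lieDelta, mapDomain_fsum, smul_fsum]
      refine fsum_congr (fun q hq => ?_)
      rw [mapDomain_sub', mapDomain_smul', Finsupp.mapDomain_single, Finsupp.mapDomain_single]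
      have hds : dsum ds p.2 = dsum ds q.1 + dsum ds q.2 := by
        rw [← (mem_cuts hq).2.2, dsum_append]
      rw [hds]
  rw [fsum_congr hpt, fsum_sub_fn]
  rw [tcuts_reindex1 w (fun t =>
    single (t.1, t.2.1, t.2.2) (1:K)
      - zsgn K (dsum ds t.1 * dsum ds t.2.1) • single (t.2.1, t.1, t.2.2) 1)]
  rw [tcuts_reindex2 w (fun t =>
    zsgn K (dsum ds t.1 * (dsum ds t.2.1 + dsum ds t.2.2)) •
      (single (t.2.1, t.2.2, t.1) (1:K)
        - zsgn K (dsum ds t.2.1 * dsum ds t.2.2) • single (t.2.2, t.2.1, t.1) 1))]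
  rw [← fsum_sub_fn]
  rfl

lemma triple_cancel (ds : ι → ℤ) (t : List ι × List ι × List ι) :
    Efun ds t + tau12 K (dsum ds) (tau23 K (dsum ds) (Efun ds t))
      + tau23 K (dsum ds) (tau12 K (dsum ds) (Efun ds t)) = 0 := by
  obtain ⟨a, b, c⟩ := t
  simp only [Efun, map_sub, map_smul, tau12_single, tau23_single]
  set α := dsum ds a with hα
  set β := dsum ds b with hβ
  set γ := dsum ds c with hγ
  have e1 : zsgn K (α * (β + γ)) = zsgn K (α * β) * zsgn K (α * γ) := by
    rw [mul_add, zsgn_add]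
  set x := zsgn K (α * β) with hx
  set y := zsgn K (α * γ) with hy
  set z := zsgn K (β * γ) with hz
  have hxx : x * x = 1 := zsgn_mul_self _
  have hyy : y * y = 1 := zsgn_mul_self _
  have hzz : z * z = 1 := zsgn_mul_self _
  have e2 : zsgn K (β * α) = x := by rw [hx, mul_comm]
  have e3 : zsgn K (γ * α) = y := by rw [hy, mul_comm]
  have e4 : zsgn K (γ * β) = z := by rw [hz, mul_comm]
  rw [e1, e2, e3, e4]
  match_scalars
  · linear_combination (-(y*y)) * hxx - hyy
  · linear_combination (x*y*y) * hzz + x * hyy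
  · ring
  · ring
  · linear_combination (-(y*z)) * hxx
  · linear_combination (x*x*z) * hyy

end Lemmas6
section Lemmas7
variable {K : Type} [Field K] {ι : Type}

lemma coJac_word (ds : ι → ℤ) (w : List ι) :
    firstT (lieDelta K ds) (lieDelta K ds w)
      + tau12 K (dsum ds) (tau23 K (dsum ds) (firstT (lieDelta K ds) (lieDelta K ds w)))
      + tau23 K (dsum ds) (tau12 K (dsum ds) (firstT (lieDelta K ds) (lieDelta K ds w)))
      = 0 := by
  rw [firstT_lieDelta, map_fsum, map_fsum, map_fsum, map_fsum,
    ← fsum_add_fn, ← fsum_add_fn]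
  have h : (fun t => Efun (K := K) ds t
      + tau12 K (dsum ds) (tau23 K (dsum ds) (Efun ds t))
      + tau23 K (dsum ds) (tau12 K (dsum ds) (Efun ds t)))
      = (fun _ => (0 : FM K (List ι × List ι × List ι))) :=
    funext (triple_cancel ds)
  rw [h, fsum_zero_fn]

lemma coJac_zero (ds : ι → ℤ) (x : FM K (List ι)) :
    firstT (lieDelta K ds) (extL (lieDelta K ds) x)
      + tau12 K (dsum ds) (tau23 K (dsum ds)
          (firstT (lieDelta K ds) (extL (lieDelta K ds) x)))
      + tau23 K (dsum ds) (tau12 K (dsum ds)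
          (firstT (lieDelta K ds) (extL (lieDelta K ds) x))) = 0 := by
  induction x using Finsupp.induction_linear with
  | zero => simp
  | add f g hf hg =>
    simp only [map_add]
    calc firstT (lieDelta K ds) (extL (lieDelta K ds) f)
          + firstT (lieDelta K ds) (extL (lieDelta K ds) g)
          + (tau12 K (dsum ds) (tau23 K (dsum ds) (firstT (lieDelta K ds) (extL (lieDelta K ds) f)))
            + tau12 K (dsum ds) (tau23 K (dsum ds) (firstT (lieDelta K ds) (extL (lieDelta K ds) g))))
          + (tau23 K (dsum ds) (tau12 K (dsum ds) (firstT (lieDelta K ds) (extL (lieDelta K ds) f)))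
            + tau23 K (dsum ds) (tau12 K (dsum ds) (firstT (lieDelta K ds) (extL (lieDelta K ds) g))))
        = (firstT (lieDelta K ds) (extL (lieDelta K ds) f)
            + tau12 K (dsum ds) (tau23 K (dsum ds) (firstT (lieDelta K ds) (extL (lieDelta K ds) f)))
            + tau23 K (dsum ds) (tau12 K (dsum ds) (firstT (lieDelta K ds) (extL (lieDelta K ds) f))))
          + (firstT (lieDelta K ds) (extL (lieDelta K ds) g)
            + tau12 K (dsum ds) (tau23 K (dsum ds) (firstT (lieDelta K ds) (extL (lieDelta K ds) g)))
            + tau23 K (dsum ds) (tau12 K (dsum ds) (firstT (lieDelta K ds) (extL (lieDelta K ds) g)))) := by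
          abel
      _ = 0 := by rw [hf, hg, add_zero]
  | single a b =>
    rw [extL_single, map_smul, map_smul, map_smul, map_smul, map_smul,
      ← smul_add, ← smul_add, coJac_word, smul_zero]

end Lemmas7
section Lemmas8
variable {K : Type} [Field K] {ι : Type}

lemma dP_cons (c : ι) (w : List ι) :
    dP (K := K) (c :: w)
      = single ([], c :: w) 1
        + Finsupp.mapDomain (fun p => (c :: p.1, p.2)) (dP w) := by
  rw [dP, dP]
  have hl : (c :: w).length + 1 = (w.length + 1) + 1 := by simp
  rw [hl, Finset.sum_range_succ']
  have hmap : Finsupp.mapDomain (fun p => (c :: p.1, p.2))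
      (∑ k ∈ Finset.range (w.length + 1), single (w.take k, w.drop k) (1:K))
      = ∑ k ∈ Finset.range (w.length + 1),
          single ((c :: w).take (k+1), (c :: w).drop (k+1)) (1:K) := by
    have : Finsupp.mapDomain (α := List ι × List ι) (M := K) (fun p => (c :: p.1, p.2))
        = Finsupp.lmapDomain K K (fun p : List ι × List ι => (c :: p.1, p.2)) := rfl
    rw [this, map_sum]
    refine Finset.sum_congr rfl (fun k _ => ?_)
    rw [Finsupp.lmapDomain_apply, Finsupp.mapDomain_single]
    simp [List.take_succ_cons, List.drop_succ_cons]
  rw [hmap]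
  simp [add_comm]

lemma dcF_eq (w : List ι) (hw : w ≠ []) :
    dcF (K := K) w = dP w - single ([], w) 1 - single (w, []) 1 := by
  have hn : w.length = (w.length - 1) + 1 := by
    have := List.length_pos_iff.2 hw; omega
  rw [dP, dcF]
  rw [show w.length + 1 = ((w.length - 1) + 1) + 1 by omega]
  rw [Finset.sum_range_succ', Finset.sum_range_succ]
  have h1 : w.take ((w.length - 1) + 1) = w := by
    rw [← hn]; exact List.take_length
  have h2 : w.drop ((w.length - 1) + 1) = [] := by
    rw [← hn]; exact List.drop_length
  rw [h1, h2]
  simp only [List.take_zero, List.drop_zero]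
  abel

/-- the double-cut expansion of `Δ'∘sh` -/
def Psi (ds : ι → ℤ) (u v : List ι) : FM K (List ι × List ι) :=
  ∑ k ∈ Finset.range (u.length + 1), ∑ l ∈ Finset.range (v.length + 1),
    zsgn K (dsum ds (v.take l) * dsum ds (u.drop k)) •
      tmul (shf K ds (u.take k) (v.take l)) (shf K ds (u.drop k) (v.drop l))

lemma double_succ {M : Type} [AddCommMonoid M] (m n : ℕ) (f A B : ℕ → ℕ → M) (C : M)
    (h00 : f 0 0 = C)
    (h0l : ∀ l < n + 1, f 0 (l+1) = B 0 l)
    (hk0 : ∀ k < m + 1, f (k+1) 0 = A k 0)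
    (hkl : ∀ k < m + 1, ∀ l < n + 1, f (k+1) (l+1) = A k (l+1) + B (k+1) l) :
    (∑ k ∈ Finset.range (m+1+1), ∑ l ∈ Finset.range (n+1+1), f k l)
      = C + (∑ k ∈ Finset.range (m+1), ∑ l ∈ Finset.range (n+1+1), A k l)
          + (∑ k ∈ Finset.range (m+1+1), ∑ l ∈ Finset.range (n+1), B k l) := by
  rw [Finset.sum_range_succ']
  have hin0 : ∑ l ∈ Finset.range (n+1+1), f 0 l
      = (∑ l ∈ Finset.range (n+1), B 0 l) + C := by
    rw [Finset.sum_range_succ', h00]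
    congr 1
    exact Finset.sum_congr rfl (fun l hl => h0l l (Finset.mem_range.1 hl))
  have hink : ∀ k ∈ Finset.range (m+1), ∑ l ∈ Finset.range (n+1+1), f (k+1) l
      = (∑ l ∈ Finset.range (n+1+1), A k l) + ∑ l ∈ Finset.range (n+1), B (k+1) l := by
    intro k hk
    have hk' := Finset.mem_range.1 hk
    rw [Finset.sum_range_succ' (f (k+1)) (n+1)]
    rw [Finset.sum_congr rfl (fun l hl => hkl k hk' l (Finset.mem_range.1 hl))]
    rw [Finset.sum_add_distrib, hk0 k hk']
    rw [Finset.sum_range_succ' (A k) (n+1)]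
    abel
  rw [Finset.sum_congr rfl hink, hin0, Finset.sum_add_distrib]
  rw [Finset.sum_range_succ' (fun k => ∑ l ∈ Finset.range (n+1), B k l) (m+1)]
  abel

end Lemmas8
section Lemmas9
variable {K : Type} [Field K] {ι : Type}

lemma mapDomain_finset_sum {α β γ : Type} (g : α → β) (s : Finset γ) (f : γ → FM K α) :
    Finsupp.mapDomain g (∑ i ∈ s, f i) = ∑ i ∈ s, Finsupp.mapDomain g (f i) := by
  have h : ∀ y : FM K α, Finsupp.mapDomain g y = Finsupp.lmapDomain K K g y := fun _ => rfl
  rw [h, map_sum]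
  exact Finset.sum_congr rfl (fun i _ => (h (f i)).symm)

lemma tmul_cons_left (c : ι) {β : Type} (X : FM K (List ι)) (Y : FM K β) :
    tmul (Finsupp.mapDomain (c :: ·) X) Y
      = Finsupp.mapDomain (fun p : List ι × β => (c :: p.1, p.2)) (tmul X Y) := by
  rw [tmul_mapDomain_left]

lemma extL_dP_mapcons (c : ι) (Z : FM K (List ι)) :
    extL (dP (K := K)) (Finsupp.mapDomain (c :: ·) Z)
      = Finsupp.mapDomain (fun w => (([] : List ι), c :: w)) Z
        + Finsupp.mapDomain (fun p : List ι × List ι => (c :: p.1, p.2))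
            (extL (dP (K := K)) Z) := by
  rw [extL_mapDomain]
  simp only [dP_cons]
  rw [extL_fun_add, extL_single_comp, extL_map]

lemma extL_dP_shf (ds : ι → ℤ) : ∀ u v : List ι,
    extL (dP (K := K)) (shf K ds u v) = Psi ds u v := by
  intro u
  induction u with
  | nil =>
    intro v
    rw [shf_nil_left, extL_single, one_smul, Psi]
    simp only [List.length_nil, zero_add, Finset.sum_range_one, List.take_nil, List.drop_nil]
    rw [dP]
    refine Finset.sum_congr rfl (fun l _ => ?_)
    rw [shf_nil_left, shf_nil_left, tmul_single_single, dsum_nil, mul_zero, zsgn_zero, one_smul]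
  | cons a u' ihu =>
    intro v
    induction v with
    | nil =>
      rw [shf_nil_right, extL_single, one_smul, Psi]
      simp only [List.length_nil, zero_add, Finset.sum_range_one, List.take_nil, List.drop_nil]
      rw [dP]
      refine Finset.sum_congr rfl (fun k _ => ?_)
      rw [shf_nil_right, shf_nil_right, tmul_single_single, dsum_nil, zero_mul, zsgn_zero,
        one_smul]
    | cons b v' ihv =>
      have hL : extL (dP (K:=K)) (shf K ds (a :: u') (b :: v'))
          = (Finsupp.mapDomain (fun w => (([]:List ι), a :: w)) (shf K ds u' (b :: v'))
              + Finsupp.mapDomain (fun p : List ι × List ι => (a :: p.1, p.2))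
                  (Psi ds u' (b :: v')))
            + zsgn K (ds b * dsum ds (a :: u')) •
              (Finsupp.mapDomain (fun w => (([]:List ι), b :: w)) (shf K ds (a :: u') v')
                + Finsupp.mapDomain (fun p : List ι × List ι => (b :: p.1, p.2))
                    (Psi ds (a :: u') v')) := by
        rw [shf_cons_cons, map_add, map_smul, extL_dP_mapcons, extL_dP_mapcons,
          ihu (b :: v'), ihv]
      rw [hL]
      have hC : Finsupp.mapDomain (Prod.mk ([] : List ι)) (shf K ds (a :: u') (b :: v'))
          = Finsupp.mapDomain (fun w => (([]:List ι), a :: w)) (shf K ds u' (b :: v'))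
            + zsgn K (ds b * dsum ds (a :: u')) •
                Finsupp.mapDomain (fun w => (([]:List ι), b :: w)) (shf K ds (a :: u') v') := by
        rw [shf_cons_cons, Finsupp.mapDomain_add, mapDomain_smul',
          ← Finsupp.mapDomain_comp, ← Finsupp.mapDomain_comp]
        rfl
      have key : Psi (K := K) ds (a :: u') (b :: v')
          = Finsupp.mapDomain (Prod.mk ([] : List ι)) (shf K ds (a :: u') (b :: v'))
            + Finsupp.mapDomain (fun p : List ι × List ι => (a :: p.1, p.2))
                (Psi ds u' (b :: v'))
            + zsgn K (ds b * dsum ds (a :: u')) •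
                Finsupp.mapDomain (fun p : List ι × List ι => (b :: p.1, p.2))
                  (Psi ds (a :: u') v') := by
        rw [Psi, Psi, Psi]
        simp only [List.length_cons]
        have hA : Finsupp.mapDomain (fun p : List ι × List ι => (a :: p.1, p.2))
            (∑ k ∈ Finset.range (u'.length + 1), ∑ l ∈ Finset.range (v'.length + 1 + 1),
              zsgn K (dsum ds ((b :: v').take l) * dsum ds (u'.drop k)) •
                tmul (shf K ds (u'.take k) ((b :: v').take l))
                  (shf K ds (u'.drop k) ((b :: v').drop l)))
            = ∑ k ∈ Finset.range (u'.length + 1), ∑ l ∈ Finset.range (v'.length + 1 + 1),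
                zsgn K (dsum ds ((b :: v').take l) * dsum ds (u'.drop k)) •
                  tmul (Finsupp.mapDomain (a :: ·) (shf K ds (u'.take k) ((b :: v').take l)))
                    (shf K ds (u'.drop k) ((b :: v').drop l)) := by
          rw [mapDomain_finset_sum]
          refine Finset.sum_congr rfl (fun k _ => ?_)
          rw [mapDomain_finset_sum]
          refine Finset.sum_congr rfl (fun l _ => ?_)
          rw [mapDomain_smul', ← tmul_cons_left]
        have hB : zsgn K (ds b * dsum ds (a :: u')) •
            Finsupp.mapDomain (fun p : List ι × List ι => (b :: p.1, p.2))
            (∑ k ∈ Finset.range (u'.length + 1 + 1), ∑ l ∈ Finset.range (v'.length + 1),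
              zsgn K (dsum ds (v'.take l) * dsum ds ((a :: u').drop k)) •
                tmul (shf K ds ((a :: u').take k) (v'.take l))
                  (shf K ds ((a :: u').drop k) (v'.drop l)))
            = ∑ k ∈ Finset.range (u'.length + 1 + 1), ∑ l ∈ Finset.range (v'.length + 1),
                zsgn K (ds b * dsum ds (a :: u')) •
                  (zsgn K (dsum ds (v'.take l) * dsum ds ((a :: u').drop k)) •
                    tmul (Finsupp.mapDomain (b :: ·) (shf K ds ((a :: u').take k) (v'.take l)))
                      (shf K ds ((a :: u').drop k) (v'.drop l))) := by
          rw [mapDomain_finset_sum, Finset.smul_sum]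
          refine Finset.sum_congr rfl (fun k _ => ?_)
          rw [mapDomain_finset_sum, Finset.smul_sum]
          refine Finset.sum_congr rfl (fun l _ => ?_)
          rw [mapDomain_smul', ← tmul_cons_left]
        rw [hA, hB]
        refine double_succ u'.length v'.length _ _ _ _ ?_ ?_ ?_ ?_
        · -- h00
          simp only [List.take_zero, List.drop_zero]
          rw [dsum_nil, zero_mul, zsgn_zero, one_smul, shf_nil_left, tmul_single_one_left]
        · -- h0l
          intro l _
          simp only [List.take_succ_cons, List.drop_succ_cons, List.take_zero, List.drop_zero]
          rw [shf_nil_left]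
          have h1 : single (b :: v'.take l) (1:K)
              = Finsupp.mapDomain (b :: ·) (shf K ds ([] : List ι) (v'.take l)) := by
            rw [shf_nil_left, Finsupp.mapDomain_single]
          rw [h1, smul_smul, ← zsgn_add]
          congr 2
          rw [dsum_cons]
          ring
        · -- hk0
          intro k _
          simp only [List.take_succ_cons, List.drop_succ_cons, List.take_zero, List.drop_zero]
          simp only [dsum_nil, zero_mul, zsgn_zero, one_smul]
          have h1 : shf K ds (a :: u'.take k) ([] : List ι)
              = Finsupp.mapDomain (a :: ·) (shf K ds (u'.take k) ([] : List ι)) := by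
            rw [shf_nil_right, shf_nil_right, Finsupp.mapDomain_single]
          rw [h1]
        · -- hkl
          intro k _ l _
          simp only [List.take_succ_cons, List.drop_succ_cons]
          rw [shf_cons_cons, tmul_add_left, tmul_smul_left, smul_add]
          simp only [smul_smul]
          congr 2
          rw [← zsgn_add, ← zsgn_add]
          congr 1
          have hsp : dsum ds u' = dsum ds (u'.take k) + dsum ds (u'.drop k) := by
            rw [← dsum_append, List.take_append_drop]
          simp only [dsum_cons]
          rw [hsp]
          ring
      rw [key, hC, smul_add]
      abel

end Lemmas9
section Lemmas10
variable {K : Type} [Field K] {ι : Type}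

lemma extL_fun_sub {α β : Type} (f g : α → FM K β) (x : FM K α) :
    extL (fun a => f a - g a) x = extL f x - extL g x := by
  rw [extL_apply, extL_apply, extL_apply, ← Finsupp.sum_sub]
  exact Finsupp.sum_congr (fun a _ => by rw [smul_sub])

lemma extL_comp {α β γ : Type} (L : FM K β →ₗ[K] FM K γ) (f : α → FM K β) (x : FM K α) :
    extL (fun a => L (f a)) x = L (extL f x) := by
  rw [extL_apply, extL_apply, map_finsuppSum]
  exact Finsupp.sum_congr (fun a _ => (map_smul L _ _).symm)

lemma shf_mem_shRel (ds : ι → ℤ) {u v : List ι} (hu : u ≠ []) (hv : v ≠ []) :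
    shf K ds u v ∈ shRel K ds := ⟨u, v, hu, hv, rfl⟩

lemma memL (ds : ι → ℤ) {u v : List ι} (hu : u ≠ []) (hv : v ≠ [])
    (Y : FM K (List ι)) : tmul (shf K ds u v) Y ∈ idealPair (shRel K ds) := by
  rw [tmul_flip, extL_apply]
  refine Submodule.finsuppSum_mem K _ _ _ (fun y _ => ?_)
  refine Submodule.smul_mem _ _ ?_
  exact Submodule.subset_span
    (Set.mem_union_left _ ⟨y, shf K ds u v, shf_mem_shRel ds hu hv, rfl⟩)

lemma memR (ds : ι → ℤ) {u v : List ι} (hu : u ≠ []) (hv : v ≠ [])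
    (X : FM K (List ι)) : tmul X (shf K ds u v) ∈ idealPair (shRel K ds) := by
  rw [tmul, extL_apply]
  refine Submodule.finsuppSum_mem K _ _ _ (fun x _ => ?_)
  refine Submodule.smul_mem _ _ ?_
  exact Submodule.subset_span
    (Set.mem_union_right _ ⟨x, shf K ds u v, shf_mem_shRel ds hu hv, rfl⟩)

lemma sum_twoval {M : Type} [AddCommMonoid M] (N i j : ℕ) (hij : i ≠ j)
    (hi : i < N) (hj : j < N) (P Q : M) :
    (∑ x ∈ Finset.range N, if x = i then P else if x = j then Q else 0) = P + Q := by
  have hsplit : ∀ x : ℕ, (if x = i then P else if x = j then Q else 0)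
      = (if x = i then P else 0) + (if x = j then Q else 0) := by
    intro x
    by_cases h1 : x = i
    · subst h1
      rw [if_pos rfl, if_pos rfl, if_neg hij, add_zero]
    · by_cases h2 : x = j <;> simp [h1, h2, Ne.symm hij]
  rw [Finset.sum_congr rfl (fun x _ => hsplit x), Finset.sum_add_distrib,
    Finset.sum_ite_eq' (Finset.range N) i (fun _ => P),
    Finset.sum_ite_eq' (Finset.range N) j (fun _ => Q)]
  simp [Finset.mem_range, hi, hj]

lemma tauP_ideal (ds : ι → ℤ) {x : FM K (List ι × List ι)}
    (hx : x ∈ idealPair (shRel K ds)) :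
    tauP K (dsum ds) x ∈ idealPair (shRel K ds) := by
  refine Submodule.span_induction ?_ ?_ ?_ ?_ hx
  · rintro y (⟨c, p, ⟨u, v, hu, hv, rfl⟩, rfl⟩ | ⟨c, p, ⟨u, v, hu, hv, rfl⟩, rfl⟩)
    · rw [tauP, extL_mapDomain]
      have h1 : extL (fun a : List ι =>
            zsgn K (dsum ds (a, c).1 * dsum ds (a, c).2) • single ((a, c).2, (a, c).1) (1:K))
            (shf K ds u v)
          = extL (fun a : List ι =>
              zsgn K ((dsum ds u + dsum ds v) * dsum ds c) • single (c, a) (1:K))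
              (shf K ds u v) := by
        refine extL_congr_support (fun w hw => ?_)
        rw [shf_support_dsum ds u v hw]
      rw [h1, extL_fun_smul, extL_single_comp]
      refine Submodule.smul_mem _ _ ?_
      exact Submodule.subset_span
        (Set.mem_union_right _ ⟨c, shf K ds u v, shf_mem_shRel ds hu hv, rfl⟩)
    · rw [tauP, extL_mapDomain]
      have h1 : extL (fun a : List ι =>
            zsgn K (dsum ds (c, a).1 * dsum ds (c, a).2) • single ((c, a).2, (c, a).1) (1:K))
            (shf K ds u v)
          = extL (fun a : List ι =>
              zsgn K (dsum ds c * (dsum ds u + dsum ds v)) • single (a, c) (1:K))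
              (shf K ds u v) := by
        refine extL_congr_support (fun w hw => ?_)
        rw [shf_support_dsum ds u v hw]
      rw [h1, extL_fun_smul, extL_single_comp]
      refine Submodule.smul_mem _ _ ?_
      exact Submodule.subset_span
        (Set.mem_union_left _ ⟨c, shf K ds u v, shf_mem_shRel ds hu hv, rfl⟩)
  · rw [map_zero]; exact Submodule.zero_mem _
  · intro y z _ _ hy hz
    rw [map_add]; exact Submodule.add_mem _ hy hz
  · intro a y _ hy
    rw [map_smul]; exact Submodule.smul_mem _ _ hy

end Lemmas10
section Lemmas11
variable {K : Type} [Field K] {ι : Type}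

lemma Psi_decomp (ds : ι → ℤ) {u v : List ι} (hu : u ≠ []) (hv : v ≠ []) :
    Psi (K := K) ds u v
      - Finsupp.mapDomain (Prod.mk ([] : List ι)) (shf K ds u v)
      - Finsupp.mapDomain (fun w => (w, ([] : List ι))) (shf K ds u v)
      - single (u, v) 1
      - zsgn K (dsum ds v * dsum ds u) • single (v, u) 1
      ∈ idealPair (shRel K ds) := by
  classical
  have hul : u.length ≠ 0 := by simpa using hu
  have hvl : v.length ≠ 0 := by simpa using hv
  set M0 : FM K (List ι × List ι) :=
    Finsupp.mapDomain (Prod.mk ([] : List ι)) (shf K ds u v) with hM0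
  set M1 : FM K (List ι × List ι) :=
    Finsupp.mapDomain (fun w => (w, ([] : List ι))) (shf K ds u v) with hM1
  set P : FM K (List ι × List ι) := single (u, v) 1 with hP
  set Q : FM K (List ι × List ι) :=
    zsgn K (dsum ds v * dsum ds u) • single (v, u) 1 with hQ
  set S : ℕ → ℕ → FM K (List ι × List ι) := fun k l =>
    if k = 0 then (if l = 0 then M0 else if l = v.length then Q else 0)
    else if k = u.length then (if l = 0 then P else if l = v.length then M1 else 0)
    else 0 with hS
  have hmem : ∀ k ∈ Finset.range (u.length + 1), ∀ l ∈ Finset.range (v.length + 1),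
      (zsgn K (dsum ds (v.take l) * dsum ds (u.drop k)) •
        tmul (shf K ds (u.take k) (v.take l)) (shf K ds (u.drop k) (v.drop l)))
        - S k l ∈ idealPair (shRel K ds) := by
    intro k hk l hl
    rw [Finset.mem_range] at hk hl
    by_cases hk0 : k = 0
    · subst hk0
      by_cases hl0 : l = 0
      · subst hl0
        have hF : (zsgn K (dsum ds (v.take 0) * dsum ds (u.drop 0)) •
            tmul (shf K ds (u.take 0) (v.take 0)) (shf K ds (u.drop 0) (v.drop 0))) = M0 := by
          simp only [List.take_zero, List.drop_zero, dsum_nil, zero_mul, zsgn_zero, one_smul]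
          rw [shf_nil_left, tmul_single_one_left, hM0]
        rw [hF]
        simp [hS]
      · by_cases hlv : l = v.length
        · subst hlv
          have hF : (zsgn K (dsum ds (v.take v.length) * dsum ds (u.drop 0)) •
              tmul (shf K ds (u.take 0) (v.take v.length))
                (shf K ds (u.drop 0) (v.drop v.length))) = Q := by
            rw [List.take_length, List.drop_length, List.take_zero, List.drop_zero,
              shf_nil_left, shf_nil_right, tmul_single_single, hQ]
          rw [hF]
          simp [hS, hl0]
        · have hSz : S 0 l = 0 := by
            simp [hS, hl0, hlv]
          rw [hSz, sub_zero]
          refine Submodule.smul_mem _ _ ?_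
          refine memR ds ?_ ?_ _
          · simpa using hu
          · simp only [ne_eq, List.drop_eq_nil_iff]
            omega
    · by_cases hku : k = u.length
      · subst hku
        by_cases hl0 : l = 0
        · subst hl0
          have hF : (zsgn K (dsum ds (v.take 0) * dsum ds (u.drop u.length)) •
              tmul (shf K ds (u.take u.length) (v.take 0))
                (shf K ds (u.drop u.length) (v.drop 0))) = P := by
            rw [List.take_length, List.drop_length, List.take_zero, List.drop_zero,
              shf_nil_left, shf_nil_right, tmul_single_single, hP, dsum_nil, zero_mul,
              zsgn_zero, one_smul]
          rw [hF]
          simp [hS, hk0]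
        · by_cases hlv : l = v.length
          · subst hlv
            have hF : (zsgn K (dsum ds (v.take v.length) * dsum ds (u.drop u.length)) •
                tmul (shf K ds (u.take u.length) (v.take v.length))
                  (shf K ds (u.drop u.length) (v.drop v.length))) = M1 := by
              rw [List.take_length, List.take_length, List.drop_length, List.drop_length,
                dsum_nil, mul_zero, zsgn_zero, one_smul, shf_nil_left, tmul_single_one_right,
                hM1]
            rw [hF]
            simp [hS, hk0, hl0]
          · have hSz : S u.length l = 0 := by
              simp [hS, hk0, hl0, hlv]
            rw [hSz, sub_zero]
            refine Submodule.smul_mem _ _ ?_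
            refine memL ds ?_ ?_ _
            · simp only [ne_eq, List.take_eq_nil_iff]
              push_neg
              exact ⟨hul, hu⟩
            · simp only [ne_eq, List.take_eq_nil_iff]
              push_neg
              exact ⟨hl0, hv⟩
      · have hSz : S k l = 0 := by
          simp [hS, hk0, hku]
        rw [hSz, sub_zero]
        refine Submodule.smul_mem _ _ ?_
        by_cases hl0 : l = 0
        · refine memR ds ?_ ?_ _
          · simp only [ne_eq, List.drop_eq_nil_iff]
            omega
          · subst hl0
            simpa using hv
        · refine memL ds ?_ ?_ _
          · simp only [ne_eq, List.take_eq_nil_iff]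
            push_neg
            exact ⟨hk0, hu⟩
          · simp only [ne_eq, List.take_eq_nil_iff]
            push_neg
            exact ⟨hl0, hv⟩
  have hinner : ∀ k : ℕ, (∑ l ∈ Finset.range (v.length + 1), S k l)
      = if k = 0 then M0 + Q else if k = u.length then P + M1 else 0 := by
    intro k
    by_cases hk0 : k = 0
    · rw [if_pos hk0]
      have : ∀ l, S k l = if l = 0 then M0 else if l = v.length then Q else 0 := by
        intro l; simp [hS, hk0]
      rw [Finset.sum_congr rfl (fun l _ => this l)]
      exact sum_twoval _ _ _ (Ne.symm hvl) (by omega) (by omega) M0 Q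
    · rw [if_neg hk0]
      by_cases hku : k = u.length
      · rw [if_pos hku]
        have : ∀ l, S k l = if l = 0 then P else if l = v.length then M1 else 0 := by
          intro l; simp [hS, hk0, hku, hu]
        rw [Finset.sum_congr rfl (fun l _ => this l)]
        exact sum_twoval _ _ _ (Ne.symm hvl) (by omega) (by omega) P M1
      · rw [if_neg hku]
        have : ∀ l, S k l = 0 := by
          intro l; simp [hS, hk0, hku]
        rw [Finset.sum_congr rfl (fun l _ => this l), Finset.sum_const_zero]
  have hsum : (∑ k ∈ Finset.range (u.length + 1), ∑ l ∈ Finset.range (v.length + 1), S k l)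
      = (M0 + Q) + (P + M1) := by
    rw [Finset.sum_congr rfl (fun k _ => hinner k)]
    exact sum_twoval _ _ _ (Ne.symm hul) (by omega) (by omega) (M0 + Q) (P + M1)
  have hrw : Psi (K := K) ds u v - M0 - M1 - P - Q
      = ∑ k ∈ Finset.range (u.length + 1), ∑ l ∈ Finset.range (v.length + 1),
          ((zsgn K (dsum ds (v.take l) * dsum ds (u.drop k)) •
            tmul (shf K ds (u.take k) (v.take l)) (shf K ds (u.drop k) (v.drop l)))
            - S k l) := by
    rw [Psi]
    have h2 : ∀ k, (∑ l ∈ Finset.range (v.length + 1),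
        ((zsgn K (dsum ds (v.take l) * dsum ds (u.drop k)) •
          tmul (shf K ds (u.take k) (v.take l)) (shf K ds (u.drop k) (v.drop l)))
          - S k l))
        = (∑ l ∈ Finset.range (v.length + 1),
            zsgn K (dsum ds (v.take l) * dsum ds (u.drop k)) •
              tmul (shf K ds (u.take k) (v.take l)) (shf K ds (u.drop k) (v.drop l)))
          - ∑ l ∈ Finset.range (v.length + 1), S k l := by
      intro k; rw [Finset.sum_sub_distrib]
    rw [Finset.sum_congr rfl (fun k _ => h2 k), Finset.sum_sub_distrib, hsum]
    abel
  rw [hrw]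
  exact Submodule.sum_mem _ (fun k hk => Submodule.sum_mem _ (fun l hl => hmem k hk l hl))

end Lemmas11
section Lemmas12
variable {K : Type} [Field K] {ι : Type}

lemma F_shf_mem (ds : ι → ℤ) {u v : List ι} (hu : u ≠ []) (hv : v ≠ []) :
    extL (lieDelta K ds) (shf K ds u v) ∈ idealPair (shRel K ds) := by
  have h1 : extL (lieDelta K ds) (shf K ds u v)
      = extL (dcF (K := K)) (shf K ds u v)
        - tauP K (dsum ds) (extL (dcF (K := K)) (shf K ds u v)) := by
    have hfun : (lieDelta K ds)
        = fun w => dcF (K := K) w - tauP K (dsum ds) (dcF w) := funext (lieDelta_eq ds)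
    rw [hfun, extL_fun_sub, extL_comp (tauP K (dsum ds)) (dcF (K := K))]
  have h2 : extL (dcF (K := K)) (shf K ds u v)
      = Psi ds u v - Finsupp.mapDomain (Prod.mk ([] : List ι)) (shf K ds u v)
        - Finsupp.mapDomain (fun w => (w, ([] : List ι))) (shf K ds u v) := by
    have hcong : extL (dcF (K := K)) (shf K ds u v)
        = extL (fun w => dP (K := K) w - single ([], w) 1 - single (w, []) 1)
            (shf K ds u v) :=
      extL_congr_support (fun w hw => dcF_eq w (shf_support_ne_nil ds u v hu hw))
    rw [hcong, extL_fun_sub, extL_fun_sub, extL_dP_shf,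
      extL_single_comp (fun w : List ι => (w, ([] : List ι))),
      extL_single_comp (fun w : List ι => (([] : List ι), w))]
  set M0 : FM K (List ι × List ι) :=
    Finsupp.mapDomain (Prod.mk ([] : List ι)) (shf K ds u v) with hM0
  set M1 : FM K (List ι × List ι) :=
    Finsupp.mapDomain (fun w => (w, ([] : List ι))) (shf K ds u v) with hM1
  set P : FM K (List ι × List ι) := single (u, v) 1 with hP
  set Q : FM K (List ι × List ι) :=
    zsgn K (dsum ds v * dsum ds u) • single (v, u) 1 with hQ
  set r : FM K (List ι × List ι) := Psi ds u v - M0 - M1 - P - Q with hr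
  have hrmem : r ∈ idealPair (shRel K ds) := Psi_decomp ds hu hv
  have hPQ : tauP K (dsum ds) (P + Q) = P + Q := by
    rw [map_add, hP, hQ, tauP_single, map_smul, tauP_single, smul_smul,
      mul_comm (dsum ds v) (dsum ds u), zsgn_mul_self, one_smul]
    rw [add_comm, mul_comm (dsum ds u) (dsum ds v)]
  have hD : extL (dcF (K := K)) (shf K ds u v) = r + (P + Q) := by
    rw [h2, hr]; abel
  rw [h1, hD, map_add, hPQ]
  have : r + (P + Q) - (tauP K (dsum ds) r + (P + Q))
      = r - tauP K (dsum ds) r := by abel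
  rw [this]
  exact Submodule.sub_mem _ hrmem (tauP_ideal ds hrmem)

lemma stmt2_welldef (ds : ι → ℤ) :
    ∀ x ∈ idealOf (shRel K ds), extL (lieDelta K ds) x ∈ idealPair (shRel K ds) := by
  intro x hx
  refine Submodule.span_induction ?_ ?_ ?_ ?_ hx
  · rintro y ⟨u, v, hu, hv, rfl⟩
    exact F_shf_mem ds hu hv
  · rw [map_zero]; exact Submodule.zero_mem _
  · intro y z _ _ hy hz
    rw [map_add]; exact Submodule.add_mem _ hy hz
  · intro a y _ hy
    rw [map_smul]; exact Submodule.smul_mem _ _ hy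

end Lemmas12
/-- Let `A` be a ℤ-graded vector space (free on a homogeneous
basis `ι` with degrees `d`) and let `H = ⊕_{n≥1} (⊗ⁿ A[1]) / Σ Im(sh_{p,q})` be
the quotient of the reduced tensor module on `A[1]` by the images of all
shuffle products.  Then the coproduct
`δ(x₁⊗…⊗xₙ) = Σ_j (x₁…x_j)⊗(x_{j+1}…xₙ) − ε_x(τ) (x_{j+1}…xₙ)⊗(x₁…x_j)`
is well defined on `H`, coantisymmetric `τ∘δ = −δ`, and satisfies the coJacobi
identity `(id^{⊗3} + τ₁₂∘τ₂₃ + τ₂₃∘τ₁₂)∘(δ⊗id)∘δ = 0`; that is, `(H, δ)` is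
a Lie cogebra. -/
theorem stmt2 (K ι : Type) [Field K] (d : ι → ℤ) :
    -- `ds` is the shifted degree `deg(x) = |x| − 1` on `A[1]`
    ∀ ds : ι → ℤ, ds = (fun i => d i - 1) →
    -- δ is well defined on the quotient `H`
    ((∀ x ∈ idealOf (shRel K ds), extL (lieDelta K ds) x ∈ idealPair (shRel K ds)) ∧
    -- coantisymmetry : `τ∘δ = −δ`
    (∀ x : FM K (List ι),
      tauP K (dsum ds) (extL (lieDelta K ds) x) + extL (lieDelta K ds) x
        ∈ idealPair (shRel K ds)) ∧
    -- coJacobi : `(id^{⊗3} + τ₁₂∘τ₂₃ + τ₂₃∘τ₁₂)∘(δ⊗id)∘δ = 0`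
    (∀ x : FM K (List ι),
      firstT (lieDelta K ds) (extL (lieDelta K ds) x)
        + tau12 K (dsum ds) (tau23 K (dsum ds)
            (firstT (lieDelta K ds) (extL (lieDelta K ds) x)))
        + tau23 K (dsum ds) (tau12 K (dsum ds)
            (firstT (lieDelta K ds) (extL (lieDelta K ds) x)))
        ∈ idealTriple (shRel K ds))) := by
  intro ds _
  refine ⟨stmt2_welldef ds, fun x => stmt2_antisym ds x, fun x => ?_⟩
  rw [coJac_zero ds x]
  exact Submodule.zero_mem _

end PG
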